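/- Assume A ∈ ℝ^{N×d} and y ∈ ℝ^N satisfy the standing assumption (non-unique case). Then the minimization problem min_{x ∈ L_min} E(|x|) has a unique minimizer g*, and this minimizer satisfies supp(g*) = S. -/

import Mathlib

open scoped BigOperators

noncomputable section

/-- The ℓ¹-norm of a vector in ℝ^d. -/
def l1 {d : ℕ} (x : Fin d → ℝ) : ℝ := ∑ i, |x i|

/-- The set of ℓ¹-minimizers among the solutions of A x = y. -/
def Lmin {N d : ℕ} (A : Matrix (Fin N) (Fin d) ℝ) (y : Fin N → ℝ) : Set (Fin d → ℝ) :=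
  { x | A.mulVec x = y ∧ ∀ z, A.mulVec z = y → l1 x ≤ l1 z }

open Classical in
/-- The generalized support S = ∪_{x ∈ L_min} supp(x). -/
def genS {N d : ℕ} (A : Matrix (Fin N) (Fin d) ℝ) (y : Fin N → ℝ) : Finset (Fin d) :=
  Finset.univ.filter (fun i => ∃ x ∈ Lmin A y, x i ≠ 0)

/-- The tangent space T = span{x - x' : x, x' ∈ L_min}. -/
def Tspace {N d : ℕ} (A : Matrix (Fin N) (Fin d) ℝ) (y : Fin N → ℝ) :
    Submodule ℝ (Fin d → ℝ) :=
  Submodule.span ℝ { v | ∃ x ∈ Lmin A y, ∃ x' ∈ Lmin A y, v = x - x' }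

/-- The set of quotients whose supremum is the generalized null space constant ρ(N). -/
def grhoSet {d : ℕ} (S : Finset (Fin d)) (σ : Fin d → ℝ) (Nset : Set (Fin d → ℝ)) :
    Set ℝ :=
  { r | ∃ n ∈ Nset, n ≠ 0 ∧ r = (-∑ i ∈ S, σ i * n i) / ∑ i ∈ Sᶜ, |n i| }

/-- The generalized null space constant ρ(N). -/
def grho {d : ℕ} (S : Finset (Fin d)) (σ : Fin d → ℝ) (Nset : Set (Fin d → ℝ)) : ℝ :=
  sSup (grhoSet S σ Nset)

/-- The set of quotients whose supremum is the generalized null space constant ρ⁻(N). -/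
def grhoMinusSet {d : ℕ} (S : Finset (Fin d)) (σ : Fin d → ℝ) (Nset : Set (Fin d → ℝ)) :
    Set ℝ :=
  { r | ∃ n ∈ Nset, n ≠ 0 ∧
      r = (∑ i ∈ S.filter (fun i => σ i * n i < 0), |n i|) / ∑ i ∈ Sᶜ, |n i| }

/-- The generalized null space constant ρ⁻(N). -/
def grhoMinus {d : ℕ} (S : Finset (Fin d)) (σ : Fin d → ℝ) (Nset : Set (Fin d → ℝ)) : ℝ :=
  sSup (grhoMinusSet S σ Nset)

/-- The set of quotients whose supremum is the generalized null space constant ρ̃(N). -/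
def grhoTildeSet {d : ℕ} (S : Finset (Fin d)) (σ : Fin d → ℝ) (Nset : Set (Fin d → ℝ)) :
    Set ℝ :=
  { r | ∃ n ∈ Nset, n ≠ 0 ∧ r = (∑ i ∈ S, |n i|) / ∑ i ∈ Sᶜ, |n i| }

/-- The generalized null space constant ρ̃(N). -/
def grhoTilde {d : ℕ} (S : Finset (Fin d)) (σ : Fin d → ℝ) (Nset : Set (Fin d → ℝ)) : ℝ :=
  sSup (grhoTildeSet S σ Nset)

/-- The entropy functional E(x) = ∑_{i : x_i ≠ 0} (x_i log x_i - x_i) (for x ≥ 0). -/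
def Ent {d : ℕ} (x : Fin d → ℝ) : ℝ :=
  ∑ i ∈ Finset.univ.filter (fun i => x i ≠ 0), (x i * Real.log (x i) - x i)

/-- The support of a vector, as a finset of indices. -/
def suppF {d : ℕ} (g : Fin d → ℝ) : Finset (Fin d) :=
  Finset.univ.filter (fun i => g i ≠ 0)

section AuxEntropy

open Finset Real

variable {N d : ℕ}

lemma continuous_l1' : Continuous (l1 (d := d)) := by
  unfold l1
  exact continuous_finset_sum _ fun i _ => (continuous_apply i).abs

lemma continuous_mulVecR (A : Matrix (Fin N) (Fin d) ℝ) : Continuous A.mulVec := by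
  have h : A.mulVec = fun x i => ∑ j, A i j * x j := by
    funext x i; rfl
  rw [h]
  exact continuous_pi fun i =>
    continuous_finset_sum _ fun j _ => continuous_const.mul (continuous_apply j)

lemma abs_le_l1' (x : Fin d → ℝ) (i : Fin d) : |x i| ≤ l1 x :=
  Finset.single_le_sum (fun j _ => abs_nonneg (x j)) (Finset.mem_univ i)

lemma isCompact_sol (A : Matrix (Fin N) (Fin d) ℝ) (y : Fin N → ℝ) (c : ℝ) :
    IsCompact {x : Fin d → ℝ | A.mulVec x = y ∧ l1 x ≤ c} := by
  apply Metric.isCompact_of_isClosed_isBounded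
  · have : {x : Fin d → ℝ | A.mulVec x = y ∧ l1 x ≤ c}
        = {x | A.mulVec x = y} ∩ {x | l1 x ≤ c} := rfl
    rw [this]
    exact (isClosed_eq (continuous_mulVecR A) continuous_const).inter
      (isClosed_le continuous_l1' continuous_const)
  · rw [Metric.isBounded_iff_subset_closedBall 0]
    refine ⟨max c 0, fun x hx => ?_⟩
    rw [Metric.mem_closedBall, dist_zero_right,
      pi_norm_le_iff_of_nonneg (le_max_right _ _)]
    intro i
    calc ‖x i‖ = |x i| := rfl
    _ ≤ l1 x := abs_le_l1' x i
    _ ≤ c := hx.2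
    _ ≤ max c 0 := le_max_left _ _

lemma exists_lmin (A : Matrix (Fin N) (Fin d) ℝ) (y : Fin N → ℝ)
    (hex : ∃ x, A.mulVec x = y) : (Lmin A y).Nonempty := by
  obtain ⟨x₀, hx₀⟩ := hex
  have hK : IsCompact {x : Fin d → ℝ | A.mulVec x = y ∧ l1 x ≤ l1 x₀} :=
    isCompact_sol A y (l1 x₀)
  have hne : {x : Fin d → ℝ | A.mulVec x = y ∧ l1 x ≤ l1 x₀}.Nonempty :=
    ⟨x₀, hx₀, le_refl _⟩
  obtain ⟨g, hgK, hmin⟩ := hK.exists_isMinOn hne continuous_l1'.continuousOn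
  refine ⟨g, hgK.1, fun z hz => ?_⟩
  by_cases h : l1 z ≤ l1 x₀
  · exact isMinOn_iff.mp hmin z ⟨hz, h⟩
  · exact le_trans (isMinOn_iff.mp hmin x₀ ⟨hx₀, le_refl _⟩) (le_of_not_ge h)

lemma lmin_l1_eq {A : Matrix (Fin N) (Fin d) ℝ} {y : Fin N → ℝ} {x x' : Fin d → ℝ}
    (hx : x ∈ Lmin A y) (hx' : x' ∈ Lmin A y) : l1 x = l1 x' :=
  le_antisymm (hx.2 x' hx'.1) (hx'.2 x hx.1)

lemma lmin_combo {A : Matrix (Fin N) (Fin d) ℝ} {y : Fin N → ℝ} {x x' : Fin d → ℝ}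
    (hx : x ∈ Lmin A y) (hx' : x' ∈ Lmin A y)
    {t : ℝ} (ht0 : 0 ≤ t) (ht1 : t ≤ 1) :
    (fun i => (1 - t) * x i + t * x' i) ∈ Lmin A y := by
  have hAw : A.mulVec (fun i => (1 - t) * x i + t * x' i) = y := by
    have heq : (fun i => (1 - t) * x i + t * x' i) = (1 - t) • x + t • x' := by
      funext i; simp [smul_eq_mul]
    rw [heq, Matrix.mulVec_add, Matrix.mulVec_smul, Matrix.mulVec_smul, hx.1, hx'.1]
    funext i
    simp [smul_eq_mul]
    ring
  have hl1 : l1 (fun i => (1 - t) * x i + t * x' i) ≤ l1 x := by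
    have hxx' := lmin_l1_eq hx hx'
    have h1 : l1 (fun i => (1 - t) * x i + t * x' i)
        ≤ ∑ i, ((1 - t) * |x i| + t * |x' i|) := by
      unfold l1
      apply Finset.sum_le_sum
      intro i _
      calc |(1 - t) * x i + t * x' i| ≤ |(1 - t) * x i| + |t * x' i| := abs_add_le _ _
      _ = (1 - t) * |x i| + t * |x' i| := by
          rw [abs_mul, abs_mul, abs_of_nonneg (by linarith), abs_of_nonneg ht0]
    have h2 : ∑ i, ((1 - t) * |x i| + t * |x' i|) = (1 - t) * l1 x + t * l1 x' := by
      unfold l1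
      rw [Finset.sum_add_distrib, ← Finset.mul_sum, ← Finset.mul_sum]
    rw [h2, ← hxx'] at h1
    calc l1 (fun i => (1 - t) * x i + t * x' i)
        ≤ (1 - t) * l1 x + t * l1 x := h1
    _ = l1 x := by ring
  exact ⟨hAw, fun z hz => le_trans hl1 (hx.2 z hz)⟩

lemma lmin_sign_prod {A : Matrix (Fin N) (Fin d) ℝ} {y : Fin N → ℝ} {x x' : Fin d → ℝ}
    (hx : x ∈ Lmin A y) (hx' : x' ∈ Lmin A y) (i : Fin d) : 0 ≤ x i * x' i := by
  have hm := lmin_combo hx hx' (t := 1/2) (by norm_num) (by norm_num)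
  have h1 : l1 (fun i => (1 - 1/2 : ℝ) * x i + (1/2) * x' i) = l1 x := lmin_l1_eq hm hx
  have hle : ∀ j ∈ Finset.univ,
      |(1 - 1/2 : ℝ) * x j + (1/2) * x' j| ≤ (|x j| + |x' j|)/2 := by
    intro j _
    calc |(1 - 1/2 : ℝ) * x j + (1/2) * x' j|
        ≤ |(1 - 1/2 : ℝ) * x j| + |(1/2 : ℝ) * x' j| := abs_add_le _ _
    _ = (|x j| + |x' j|)/2 := by
        rw [abs_mul, abs_mul, show |(1 - 1/2 : ℝ)| = 1/2 by norm_num,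
          show |(1/2:ℝ)| = 1/2 by norm_num]
        ring
  have hsum : ∑ j, |(1 - 1/2 : ℝ) * x j + (1/2) * x' j| = ∑ j, (|x j| + |x' j|)/2 := by
    have hxx' := lmin_l1_eq hx hx'
    have h2 : ∑ j, (|x j| + |x' j|)/2 = (l1 x + l1 x')/2 := by
      unfold l1
      rw [← Finset.sum_add_distrib, ← Finset.sum_div]
    have h3 : ∑ j, |(1 - 1/2 : ℝ) * x j + (1/2) * x' j| = l1 x := h1
    rw [h3, h2, ← hxx']
    ring
  have heq := (Finset.sum_eq_sum_iff_of_le hle).mp hsum i (Finset.mem_univ i)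
  have habs : |x i + x' i| = |x i| + |x' i| := by
    have : |(x i + x' i)/2| = (|x i| + |x' i|)/2 := by
      rw [← heq]; congr 1; ring
    rw [abs_div] at this
    simp at this
    linarith [this]
  rcases abs_cases (x i) with ⟨h1a, h2a⟩ | ⟨h1a, h2a⟩ <;>
    rcases abs_cases (x' i) with ⟨h1b, h2b⟩ | ⟨h1b, h2b⟩ <;>
    rcases abs_cases (x i + x' i) with ⟨h1c, h2c⟩ | ⟨h1c, h2c⟩ <;>
    nlinarith

lemma lmin_sign (A : Matrix (Fin N) (Fin d) ℝ) (y : Fin N → ℝ) :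
    ∃ σ : Fin d → ℝ, (∀ i, σ i = 1 ∨ σ i = -1) ∧
      ∀ x ∈ Lmin A y, ∀ i, σ i * x i = |x i| := by
  classical
  refine ⟨fun i => if ∃ x ∈ Lmin A y, 0 < x i then 1 else -1, fun i => ?_, ?_⟩
  · by_cases h : ∃ x ∈ Lmin A y, 0 < x i
    · left; simp [h]
    · right; simp [h]
  · intro x hx i
    show (if ∃ x' ∈ Lmin A y, 0 < x' i then (1:ℝ) else -1) * x i = |x i|
    by_cases h : ∃ x' ∈ Lmin A y, 0 < x' i
    · rw [if_pos h]
      obtain ⟨x', hx', hpos⟩ := h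
      have hprod := lmin_sign_prod hx hx' i
      have hxi : 0 ≤ x i := by nlinarith
      rw [abs_of_nonneg hxi, one_mul]
    · rw [if_neg h]
      push_neg at h
      have hxi : x i ≤ 0 := h x hx
      rw [abs_of_nonpos hxi]
      ring

def Faux {d : ℕ} (g : Fin d → ℝ) : ℝ := ∑ i, (|g i| * Real.log |g i| - |g i|)

lemma Ent_abs (g : Fin d → ℝ) : Ent (fun i => |g i|) = Faux g := by
  rw [Ent, Faux, Finset.sum_filter]
  apply Finset.sum_congr rfl
  intro i _
  by_cases h : |g i| = 0
  · simp [h]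
  · simp [h]

lemma continuous_Faux : Continuous (Faux (d := d)) := by
  unfold Faux
  apply continuous_finset_sum
  intro i _
  have h1 : Continuous fun g : Fin d → ℝ => |g i| := (continuous_apply i).abs
  exact (Real.continuous_mul_log.comp h1).sub h1

lemma f_combo_le {a b t : ℝ} (ha : 0 ≤ a) (hb : 0 ≤ b) (ht0 : 0 ≤ t) (ht1 : t ≤ 1) :
    ((1-t)*a + t*b) * Real.log ((1-t)*a + t*b) - ((1-t)*a + t*b)
      ≤ (1-t) * (a * Real.log a - a) + t * (b * Real.log b - b) := by
  have h := Real.convexOn_mul_log.2 (Set.mem_Ici.mpr ha) (Set.mem_Ici.mpr hb)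
    (by linarith : (0:ℝ) ≤ 1 - t) ht0 (by ring)
  simp only [smul_eq_mul] at h
  have expand : (1-t) * (a * Real.log a - a) + t * (b * Real.log b - b)
      = ((1-t) * (a * Real.log a) + t * (b * Real.log b)) - ((1-t)*a + t*b) := by ring
  rw [expand]
  linarith

lemma f_combo_lt {a b t : ℝ} (ha : 0 ≤ a) (hb : 0 ≤ b) (hab : a ≠ b)
    (ht0 : 0 < t) (ht1 : t < 1) :
    ((1-t)*a + t*b) * Real.log ((1-t)*a + t*b) - ((1-t)*a + t*b)
      < (1-t) * (a * Real.log a - a) + t * (b * Real.log b - b) := by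
  have h := Real.strictConvexOn_mul_log.2 (Set.mem_Ici.mpr ha) (Set.mem_Ici.mpr hb) hab
    (by linarith : (0:ℝ) < 1 - t) ht0 (by ring)
  simp only [smul_eq_mul] at h
  have expand : (1-t) * (a * Real.log a - a) + t * (b * Real.log b - b)
      = ((1-t) * (a * Real.log a) + t * (b * Real.log b)) - ((1-t)*a + t*b) := by ring
  rw [expand]
  linarith

end AuxEntropy

/-- the entropy minimizer over L_min is unique and has maximal support. -/
theorem entropy_minimizer_unique_maximal_support {N d : ℕ}
    (A : Matrix (Fin N) (Fin d) ℝ) (y : Fin N → ℝ)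
    (hex : ∃ x : Fin d → ℝ, A.mulVec x = y)
    (hy : y ≠ 0)
    (hker : ∃ n : Fin d → ℝ, n ≠ 0 ∧ A.mulVec n = 0) :
    ∃ g : Fin d → ℝ,
      (g ∈ Lmin A y ∧ ∀ x ∈ Lmin A y, Ent (fun i => |g i|) ≤ Ent (fun i => |x i|)) ∧
      (∀ g' ∈ Lmin A y,
        (∀ x ∈ Lmin A y, Ent (fun i => |g' i|) ≤ Ent (fun i => |x i|)) → g' = g) ∧
      suppF g = genS A y := by
  classical
  obtain ⟨σ, hσpm, hσ⟩ := lmin_sign A y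
  have hσne : ∀ i, σ i ≠ 0 := by
    intro i; rcases hσpm i with h | h <;> rw [h] <;> norm_num
  obtain ⟨x₀, hx₀⟩ := exists_lmin A y hex
  have hLeq : Lmin A y = {x | A.mulVec x = y ∧ l1 x ≤ l1 x₀} := by
    ext z
    constructor
    · intro hz; exact ⟨hz.1, hz.2 x₀ hx₀.1⟩
    · intro hz; exact ⟨hz.1, fun w hw => le_trans hz.2 (hx₀.2 w hw)⟩
  have hLcompact : IsCompact (Lmin A y) := by
    rw [hLeq]; exact isCompact_sol A y (l1 x₀)
  obtain ⟨g, hgL, hgmin'⟩ := hLcompact.exists_isMinOn ⟨x₀, hx₀⟩ continuous_Faux.continuousOn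
  have hgmin : ∀ x ∈ Lmin A y, Faux g ≤ Faux x := fun x hx => isMinOn_iff.mp hgmin' x hx
  have habs_combo : ∀ x ∈ Lmin A y, ∀ x' ∈ Lmin A y, ∀ t : ℝ, 0 ≤ t → t ≤ 1 → ∀ i,
      |(1-t) * x i + t * x' i| = (1-t) * |x i| + t * |x' i| := by
    intro x hx x' hx' t ht0 ht1 i
    have h1 := hσ _ (lmin_combo hx hx' ht0 ht1) i
    have h2 := hσ x hx i
    have h3 := hσ x' hx' i
    rw [← h1, ← h2, ← h3]
    ring
  have habs_inj : ∀ x ∈ Lmin A y, ∀ x' ∈ Lmin A y, ∀ i, |x i| = |x' i| → x i = x' i := by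
    intro x hx x' hx' i h
    have h2 := hσ x hx i
    have h3 := hσ x' hx' i
    have h4 : σ i * x i = σ i * x' i := by rw [h2, h3, h]
    exact mul_left_cancel₀ (hσne i) h4
  have huniq : ∀ g' ∈ Lmin A y, (∀ x ∈ Lmin A y, Faux g' ≤ Faux x) → g' = g := by
    intro g' hg' hmin'
    by_contra hne
    obtain ⟨i₀, hi₀⟩ : ∃ i, g' i ≠ g i := by
      by_contra h; push_neg at h; exact hne (funext h)
    have hFeq : Faux g' = Faux g := le_antisymm (hmin' g hgL) (hgmin g' hg')
    set m : Fin d → ℝ := fun i => (1 - (1/2:ℝ)) * g' i + (1/2) * g i with hm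
    have hmL : m ∈ Lmin A y := lmin_combo hg' hgL (by norm_num) (by norm_num)
    have hmabs : ∀ i, |m i| = (1 - (1/2:ℝ)) * |g' i| + (1/2) * |g i| := by
      intro i
      rw [hm]
      exact habs_combo g' hg' g hgL (1/2) (by norm_num) (by norm_num) i
    have hlt : Faux m < (1 - (1/2:ℝ)) * Faux g' + (1/2) * Faux g := by
      simp only [Faux]
      rw [Finset.mul_sum, Finset.mul_sum, ← Finset.sum_add_distrib]
      apply Finset.sum_lt_sum
      · intro i _
        rw [hmabs i]
        exact f_combo_le (abs_nonneg _) (abs_nonneg _) (by norm_num) (by norm_num)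
      · refine ⟨i₀, Finset.mem_univ i₀, ?_⟩
        rw [hmabs i₀]
        refine f_combo_lt (abs_nonneg _) (abs_nonneg _) ?_ (by norm_num) (by norm_num)
        intro h
        exact hi₀ (habs_inj g' hg' g hgL i₀ h)
    have hmge : Faux g' ≤ Faux m := hmin' m hmL
    rw [hFeq] at hlt hmge
    nlinarith [hlt, hmge]
  have hsupp : suppF g = genS A y := by
    ext i
    simp only [suppF, genS, Finset.mem_filter, Finset.mem_univ, true_and]
    constructor
    · intro h; exact ⟨g, hgL, h⟩
    · rintro ⟨x, hxL, hxi⟩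
      by_contra hg0
      have hgabs : |g i| = 0 := by rw [hg0]; exact abs_zero
      have hv : 0 < |x i| := abs_pos.mpr hxi
      set C := ∑ j, |(|x j| * Real.log |x j| - |x j|) - (|g j| * Real.log |g j| - |g j|)|
        with hC
      have hCnn : 0 ≤ C := Finset.sum_nonneg fun j _ => abs_nonneg _
      set t := min (1/2) (Real.exp (-(C + |x i| * Real.log |x i| - |x i| + 1) / |x i|))
        with htdef
      have ht0 : 0 < t := lt_min (by norm_num) (Real.exp_pos _)
      have ht1 : t < 1 := lt_of_le_of_lt (min_le_left _ _) (by norm_num)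
      set w : Fin d → ℝ := fun j => (1-t) * g j + t * x j with hwdef
      have hwL : w ∈ Lmin A y := by
        rw [hwdef]; exact lmin_combo hgL hxL ht0.le ht1.le
      have hwabs : ∀ j, |w j| = (1-t) * |g j| + t * |x j| := by
        intro j
        rw [hwdef]
        exact habs_combo g hgL x hxL t ht0.le ht1.le j
      have hterm : ∀ j ∈ Finset.univ,
          (|w j| * Real.log |w j| - |w j|) - (|g j| * Real.log |g j| - |g j|)
            ≤ (if j = i then (t * |x i|) * Real.log (t * |x i|) - t * |x i|
               else t * |(|x j| * Real.log |x j| - |x j|)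
                 - (|g j| * Real.log |g j| - |g j|)|) := by
        intro j _
        by_cases hj : j = i
        · subst hj
          rw [if_pos rfl, hwabs j, hgabs]
          have e1 : (1-t) * (0:ℝ) + t * |x j| = t * |x j| := by ring
          rw [e1]
          simp
        · rw [if_neg hj, hwabs j]
          have hcv := f_combo_le (abs_nonneg (g j)) (abs_nonneg (x j)) ht0.le ht1.le
          calc ((1-t) * |g j| + t * |x j|) * Real.log ((1-t) * |g j| + t * |x j|)
                - ((1-t) * |g j| + t * |x j|)
                - (|g j| * Real.log |g j| - |g j|)
              ≤ ((1-t) * (|g j| * Real.log |g j| - |g j|)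
                  + t * (|x j| * Real.log |x j| - |x j|))
                - (|g j| * Real.log |g j| - |g j|) := by linarith
            _ = t * ((|x j| * Real.log |x j| - |x j|)
                  - (|g j| * Real.log |g j| - |g j|)) := by ring
            _ ≤ t * |(|x j| * Real.log |x j| - |x j|)
                  - (|g j| * Real.log |g j| - |g j|)| :=
                mul_le_mul_of_nonneg_left (le_abs_self _) ht0.le
      have hsum1 : Faux w - Faux g
          ≤ ((t * |x i|) * Real.log (t * |x i|) - t * |x i|) + t * C := by
        have hL : Faux w - Faux g = ∑ j, ((|w j| * Real.log |w j| - |w j|)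
            - (|g j| * Real.log |g j| - |g j|)) := by
          simp only [Faux]
          rw [← Finset.sum_sub_distrib]
        rw [hL]
        calc ∑ j, ((|w j| * Real.log |w j| - |w j|) - (|g j| * Real.log |g j| - |g j|))
            ≤ ∑ j, (if j = i then (t * |x i|) * Real.log (t * |x i|) - t * |x i|
               else t * |(|x j| * Real.log |x j| - |x j|)
                 - (|g j| * Real.log |g j| - |g j|)|) := Finset.sum_le_sum hterm
          _ = ((t * |x i|) * Real.log (t * |x i|) - t * |x i|)
              + ∑ j ∈ Finset.univ.erase i,
                t * |(|x j| * Real.log |x j| - |x j|)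
                 - (|g j| * Real.log |g j| - |g j|)| := by
              rw [← Finset.add_sum_erase _ _ (Finset.mem_univ i), if_pos rfl]
              congr 1
              apply Finset.sum_congr rfl
              intro j hj
              rw [if_neg (Finset.ne_of_mem_erase hj)]
          _ ≤ ((t * |x i|) * Real.log (t * |x i|) - t * |x i|) + t * C := by
              apply add_le_add (le_refl _)
              rw [← Finset.mul_sum]
              apply mul_le_mul_of_nonneg_left _ ht0.le
              rw [hC]
              exact Finset.sum_le_sum_of_subset_of_nonneg
                (Finset.erase_subset _ _) (fun j _ _ => abs_nonneg _)
      have hlogt : Real.log t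
          ≤ -(C + |x i| * Real.log |x i| - |x i| + 1) / |x i| := by
        calc Real.log t
            ≤ Real.log (Real.exp (-(C + |x i| * Real.log |x i| - |x i| + 1) / |x i|)) :=
              Real.log_le_log ht0 (by rw [htdef]; exact min_le_right _ _)
          _ = -(C + |x i| * Real.log |x i| - |x i| + 1) / |x i| := Real.log_exp _
      have hkey : |x i| * Real.log t + (C + |x i| * Real.log |x i| - |x i|) ≤ -1 := by
        have h1 : |x i| * Real.log t
            ≤ |x i| * (-(C + |x i| * Real.log |x i| - |x i| + 1) / |x i|) :=
          mul_le_mul_of_nonneg_left hlogt hv.le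
        have h2 : |x i| * (-(C + |x i| * Real.log |x i| - |x i| + 1) / |x i|)
            = -(C + |x i| * Real.log |x i| - |x i| + 1) := by
          field_simp
        rw [h2] at h1
        linarith
      have hlog_tv : Real.log (t * |x i|) = Real.log t + Real.log |x i| :=
        Real.log_mul ht0.ne' hv.ne'
      have hsum2 : Faux w - Faux g
          ≤ t * (|x i| * Real.log t + (C + |x i| * Real.log |x i| - |x i|)) := by
        have e : ((t * |x i|) * (Real.log t + Real.log |x i|) - t * |x i|) + t * C
            = t * (|x i| * Real.log t + (C + |x i| * Real.log |x i| - |x i|)) := by ring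
        rw [hlog_tv] at hsum1
        linarith [hsum1, e.le, e.ge]
      have hfinal : Faux w - Faux g ≤ -t := by
        calc Faux w - Faux g
            ≤ t * (|x i| * Real.log t + (C + |x i| * Real.log |x i| - |x i|)) := hsum2
          _ ≤ t * (-1) := mul_le_mul_of_nonneg_left hkey ht0.le
          _ = -t := by ring
      have := hgmin w hwL
      linarith
  refine ⟨g, ⟨hgL, fun x hx => ?_⟩, fun g' hg' h => ?_, hsupp⟩
  · rw [Ent_abs, Ent_abs]; exact hgmin x hx
  · refine huniq g' hg' fun x hx => ?_
    have := h x hx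
    rwa [Ent_abs, Ent_abs] at this
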